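/- For any superport network with m > p, the response matrix L is symmetric: L_i^j = L_j^i for all non-root boundary vertices i and j. -/

import Mathlib

open Finset BigOperators
open scoped Classical

namespace Superport

/-- A superport network: a finite connected simple graph on `Fin n` with conductances `c`
and `p` nonempty pairwise disjoint superports `A 0, …, A (p-1)` occupying the initial
segment of the vertices, ordered consecutively. -/
structure Network where
  n : ℕ
  p : ℕ
  graph : SimpleGraph (Fin n)
  c : Fin n → Fin n → ℝ
  A : Fin p → Finset (Fin n)
  p_pos : 0 < p
  connected : graph.Connected
  c_symm : ∀ k l, c k l = c l k
  c_pos : ∀ k l, graph.Adj k l → 0 < c k l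
  c_zero : ∀ k l, ¬ graph.Adj k l → c k l = 0
  A_nonempty : ∀ i, (A i).Nonempty
  A_disjoint : ∀ i j, i ≠ j → Disjoint (A i) (A j)
  A_ordered : ∀ i j u v, i < j → u ∈ A i → v ∈ A j → u < v
  boundary_initial : ∀ v : Fin n, (∃ i, v ∈ A i) ↔ (v : ℕ) < ∑ i, (A i).card

namespace Network

variable (N : Network)

/-- The set of boundary vertices. -/
def M : Finset (Fin N.n) := Finset.univ.biUnion N.A

/-- The number of boundary vertices. -/
def m : ℕ := N.M.card

theorem mem_M_iff {v : Fin N.n} : v ∈ N.M ↔ ∃ i, v ∈ N.A i := by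
  simp [M, Finset.mem_biUnion]

/-- The root of the superport of a boundary vertex `v` (the vertex of maximal number
in the superport containing `v`); for interior `v` we set `root v = v`. -/
noncomputable def root (v : Fin N.n) : Fin N.n :=
  if h : ∃ i, v ∈ N.A i then (N.A h.choose).max' ⟨v, h.choose_spec⟩ else v

/-- The index of the last superport. -/
def lastPort : Fin N.p := ⟨N.p - 1, Nat.sub_lt N.p_pos Nat.one_pos⟩

theorem M_nonempty : N.M.Nonempty := by
  obtain ⟨v, hv⟩ := N.A_nonempty N.lastPort
  exact ⟨v, N.mem_M_iff.mpr ⟨N.lastPort, hv⟩⟩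

theorem root_mem {v : Fin N.n} (hv : v ∈ N.M) : N.root v ∈ N.M := by
  have h : ∃ i, v ∈ N.A i := N.mem_M_iff.mp hv
  rw [root, dif_pos h]
  exact N.mem_M_iff.mpr ⟨h.choose, (N.A h.choose).max'_mem _⟩

theorem root_eq_self_of_max {v : Fin N.n} (hv : v ∈ N.M) (hmax : ∀ u ∈ N.M, u ≤ v) :
    N.root v = v := by
  have h : ∃ i, v ∈ N.A i := N.mem_M_iff.mp hv
  rw [root, dif_pos h]
  exact le_antisymm (hmax _ (N.mem_M_iff.mpr ⟨h.choose, (N.A h.choose).max'_mem _⟩))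
    (Finset.le_max' _ _ h.choose_spec)

/-- Axioms (C), (I), (P), (B) for voltages `U`, currents `I`, and prescribed voltage
differences `ΔU` (only the values of `ΔU` at non-root boundary vertices are relevant). -/
def Axioms (ΔU U : Fin N.n → ℝ) (I : Fin N.n → Fin N.n → ℝ) : Prop :=
  (∀ k l, I k l = N.c k l * (U k - U l)) ∧
  (∀ k, k ∉ N.M → ∑ l, I k l = 0) ∧
  (∀ i : Fin N.p, i ≠ N.lastPort → ∑ k ∈ N.A i, ∑ l, I k l = 0) ∧
  (∀ k, k ∈ N.M → N.root k ≠ k → U k - U (N.root k) = ΔU k)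

/-- The weight of a subgraph: the product of the conductances of its edges. -/
noncomputable def weight (H : SimpleGraph (Fin N.n)) : ℝ :=
  ∏ e ∈ (Set.toFinite H.edgeSet).toFinset, Sym2.lift ⟨N.c, N.c_symm⟩ e

/-- The number of edges of a subgraph. -/
noncomputable def edgeCount (H : SimpleGraph (Fin N.n)) : ℕ :=
  (Set.toFinite H.edgeSet).toFinset.card

/-- Two vertices lie in a common superport. -/
def samePort (u v : Fin N.n) : Prop := ∃ i, u ∈ N.A i ∧ v ∈ N.A i

/-- The `X`-equivalence: two boundary vertices not in `X` are equivalent iff they lie in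
the same superport; each interior vertex and each vertex of `X` forms a singleton class.
For `X = ∅` this is the equivalence relation `∼`. -/
def xSetoid (X : Set (Fin N.n)) : Setoid (Fin N.n) where
  r u v := u = v ∨ (u ∉ X ∧ v ∉ X ∧ N.samePort u v)
  iseqv := by
    constructor
    · intro u; exact Or.inl rfl
    · rintro u v (rfl | ⟨hu, hv, i, hui, hvi⟩)
      · exact Or.inl rfl
      · exact Or.inr ⟨hv, hu, i, hvi, hui⟩
    · rintro u v w huv hvw
      rcases huv with rfl | ⟨hu, hv, i, hui, hvi⟩
      · exact hvw
      rcases hvw with rfl | ⟨hv', hw, j, hvj, hwj⟩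
      · exact Or.inr ⟨hu, hv, i, hui, hvi⟩
      · have hij : i = j := by
          by_contra hij
          exact (Finset.disjoint_left.mp (N.A_disjoint i j hij) hvi) hvj
        exact Or.inr ⟨hu, hw, i, hui, hij ▸ hwj⟩

/-- The quotient of a graph `H` by an equivalence relation `s`: classes `a ≠ b` are
adjacent iff some representatives are adjacent in `H`. -/
def quotGraph (H : SimpleGraph (Fin N.n)) (s : Setoid (Fin N.n)) :
    SimpleGraph (Quotient s) where
  Adj a b := a ≠ b ∧ ∃ u v, H.Adj u v ∧ Quotient.mk s u = a ∧ Quotient.mk s v = b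
  symm := by
    constructor
    rintro a b ⟨hab, u, v, huv, hu, hv⟩
    exact ⟨hab.symm, v, u, huv.symm, hv, hu⟩
  loopless := by
    constructor
    rintro a ⟨hab, -⟩
    exact hab rfl

/-- A spanning forest of the network. -/
def IsSpanningForest (H : SimpleGraph (Fin N.n)) : Prop := H ≤ N.graph ∧ H.IsAcyclic

/-- A spanning forest becomes a spanning tree in the quotient by the `X`-equivalence
(in the multigraph sense): the quotient is connected and the number of edges of the
forest is one less than the number of equivalence classes.  For `X = {i}` this is
"valid relative to the vertex `i`"; for `X = ∅` this is "valid". -/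
def IsValidRel (X : Set (Fin N.n)) (H : SimpleGraph (Fin N.n)) : Prop :=
  N.IsSpanningForest H ∧ (N.quotGraph H (N.xSetoid X)).Connected ∧
    N.edgeCount H + 1 = Nat.card (Quotient (N.xSetoid X))

/-- A valid forest: a spanning forest which becomes a spanning tree in the quotient
by the equivalence `∼`. -/
def IsValidForest (H : SimpleGraph (Fin N.n)) : Prop := N.IsValidRel ∅ H

/-- The sign `sgn(H, i, j)` of a spanning forest `H` with respect to vertices `i, j`. -/
noncomputable def sgnIJ (H : SimpleGraph (Fin N.n)) (i j : Fin N.n) : ℝ :=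
  if i = j ∨ ¬ (N.quotGraph H (N.xSetoid {i, j})).Reachable
      (Quotient.mk (N.xSetoid {i, j}) i) (Quotient.mk (N.xSetoid {i, j}) j)
  then 1 else -1

/-- The type of non-root boundary vertices. -/
abbrev NonRoot := {v : Fin N.n // v ∈ N.M ∧ N.root v ≠ v}

/-- The type of boundary vertices. -/
abbrev Bdry := {v : Fin N.n // v ∈ N.M}

/-- `L` is the response matrix of the superport network: for any admissible voltages and
currents, the incoming currents at the non-root boundary vertices are obtained from the
prescribed voltage differences by multiplication by `L`. -/
def IsResponse (L : Matrix N.NonRoot N.NonRoot ℝ) : Prop :=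
  ∀ (ΔU U : Fin N.n → ℝ) (I : Fin N.n → Fin N.n → ℝ), N.Axioms ΔU U I →
    ∀ x : N.NonRoot, (∑ l, I x.1 l) = ∑ y : N.NonRoot, L x y * ΔU y.1

/-- `C` is the response matrix of the electrical network obtained by unifying all the
superports: same graph and conductances, boundary vertices `M`; axioms (C) and (I). -/
def IsElecResponse (C : Matrix N.Bdry N.Bdry ℝ) : Prop :=
  ∀ (Ub : N.Bdry → ℝ) (U : Fin N.n → ℝ) (I : Fin N.n → Fin N.n → ℝ),
    (∀ k l, I k l = N.c k l * (U k - U l)) →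
    (∀ k, k ∉ N.M → ∑ l, I k l = 0) →
    (∀ v : N.Bdry, U v.1 = Ub v) →
    ∀ v : N.Bdry, (∑ l, I v.1 l) = ∑ u : N.Bdry, C v u * Ub u

/-- The sum of the weights of all valid forests. -/
noncomputable def validForestSum : ℝ :=
  ∑ H ∈ Finset.univ.filter (fun H => N.IsValidForest H), N.weight H

end Network
end Superport

namespace Superport

open Module

section Aux

lemma max'_congr_aux {α : Type*} [LinearOrder α] {s t : Finset α} (h : s = t)
    (hs : s.Nonempty) (ht : t.Nonempty) : s.max' hs = t.max' ht := by subst h; rfl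

/-- Key linear algebra lemma: a symmetric bilinear form on a finite-dimensional space
surjects onto the functionals vanishing on its kernel. -/
lemma key_surj {E : Type*} [AddCommGroup E] [Module ℝ E] [FiniteDimensional ℝ E]
    (B : E →ₗ[ℝ] E →ₗ[ℝ] ℝ) (hsym : ∀ x y, B x y = B y x)
    (f : E →ₗ[ℝ] ℝ) (hf : ∀ v, B v = 0 → f v = 0) : ∃ u, B u = f := by
  have hle : LinearMap.range B ≤ (LinearMap.ker B).dualAnnihilator := by
    rintro g ⟨u, rfl⟩
    rw [Submodule.mem_dualAnnihilator]
    intro v hv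
    rw [hsym u v, LinearMap.mem_ker.mp hv]
    rfl
  have heq : LinearMap.range B = (LinearMap.ker B).dualAnnihilator := by
    apply Submodule.eq_of_le_of_finrank_le hle
    have e1 : finrank ℝ (E ⧸ LinearMap.ker B)
        = finrank ℝ (LinearMap.ker B).dualAnnihilator :=
      (Subspace.quotEquivAnnihilator (LinearMap.ker B)).finrank_eq
    have e2 := Submodule.finrank_quotient_add_finrank (LinearMap.ker B)
    have e3 := LinearMap.finrank_range_add_finrank_ker B
    rw [← e1]
    omega
  have hmem : f ∈ (LinearMap.ker B).dualAnnihilator := by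
    rw [Submodule.mem_dualAnnihilator]
    intro v hv
    exact hf v (LinearMap.mem_ker.mp hv)
  rw [← heq] at hmem
  exact hmem

end Aux

namespace Network

variable (N : Network)

lemma c_nonneg (k l : Fin N.n) : 0 ≤ N.c k l := by
  by_cases h : N.graph.Adj k l
  · exact (N.c_pos k l h).le
  · rw [N.c_zero k l h]

lemma port_unique {v : Fin N.n} {i j : Fin N.p} (hi : v ∈ N.A i) (hj : v ∈ N.A j) : i = j := by
  by_contra h
  exact (Finset.disjoint_left.mp (N.A_disjoint i j h) hi) hj

lemma root_eq_max' {v : Fin N.n} {i : Fin N.p} (hv : v ∈ N.A i) :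
    N.root v = (N.A i).max' (N.A_nonempty i) := by
  have h : ∃ j, v ∈ N.A j := ⟨i, hv⟩
  rw [root, dif_pos h]
  exact max'_congr_aux (by rw [N.port_unique h.choose_spec hv]) _ _

lemma root_mem_port {v : Fin N.n} {i : Fin N.p} (hv : v ∈ N.A i) : N.root v ∈ N.A i := by
  rw [N.root_eq_max' hv]
  exact Finset.max'_mem _ _

lemma root_root' {v : Fin N.n} {i : Fin N.p} (hv : v ∈ N.A i) :
    N.root (N.root v) = N.root v := by
  rw [N.root_eq_max' (N.root_mem_port hv), N.root_eq_max' hv]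

/-- The energy bilinear form of the network. -/
noncomputable def Bform : (Fin N.n → ℝ) →ₗ[ℝ] (Fin N.n → ℝ) →ₗ[ℝ] ℝ :=
  LinearMap.mk₂ ℝ (fun U V => ∑ k, ∑ l, N.c k l * (U k - U l) * (V k - V l))
    (fun U U' V => by
      rw [← Finset.sum_add_distrib]
      refine Finset.sum_congr rfl fun k _ => ?_
      rw [← Finset.sum_add_distrib]
      refine Finset.sum_congr rfl fun l _ => ?_
      simp only [Pi.add_apply]; ring)
    (fun a U V => by
      rw [smul_eq_mul, Finset.mul_sum]
      refine Finset.sum_congr rfl fun k _ => ?_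
      rw [Finset.mul_sum]
      refine Finset.sum_congr rfl fun l _ => ?_
      simp only [Pi.smul_apply, smul_eq_mul]; ring)
    (fun U V V' => by
      rw [← Finset.sum_add_distrib]
      refine Finset.sum_congr rfl fun k _ => ?_
      rw [← Finset.sum_add_distrib]
      refine Finset.sum_congr rfl fun l _ => ?_
      simp only [Pi.add_apply]; ring)
    (fun a U V => by
      rw [smul_eq_mul, Finset.mul_sum]
      refine Finset.sum_congr rfl fun k _ => ?_
      rw [Finset.mul_sum]
      refine Finset.sum_congr rfl fun l _ => ?_
      simp only [Pi.smul_apply, smul_eq_mul]; ring)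

lemma Bform_apply (U V : Fin N.n → ℝ) :
    N.Bform U V = ∑ k, ∑ l, N.c k l * (U k - U l) * (V k - V l) := rfl

lemma Bform_symm (U V : Fin N.n → ℝ) : N.Bform U V = N.Bform V U := by
  rw [Bform_apply, Bform_apply]
  refine Finset.sum_congr rfl fun k _ => Finset.sum_congr rfl fun l _ => by ring

lemma Bform_eq (U V : Fin N.n → ℝ) :
    N.Bform U V = 2 * ∑ k, V k * ∑ l, N.c k l * (U k - U l) := by
  have h1 : N.Bform U V = (∑ k, ∑ l, N.c k l * (U k - U l) * V k)
      - ∑ k, ∑ l, N.c k l * (U k - U l) * V l := by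
    rw [Bform_apply, ← Finset.sum_sub_distrib]
    refine Finset.sum_congr rfl fun k _ => ?_
    rw [← Finset.sum_sub_distrib]
    exact Finset.sum_congr rfl fun l _ => by ring
  have h2 : (∑ k, ∑ l, N.c k l * (U k - U l) * V l)
      = - ∑ k, ∑ l, N.c k l * (U k - U l) * V k := by
    rw [Finset.sum_comm, ← Finset.sum_neg_distrib]
    refine Finset.sum_congr rfl fun k _ => ?_
    rw [← Finset.sum_neg_distrib]
    refine Finset.sum_congr rfl fun l _ => ?_
    rw [N.c_symm l k]; ring
  have h3 : ∑ k, V k * ∑ l, N.c k l * (U k - U l)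
      = ∑ k, ∑ l, N.c k l * (U k - U l) * V k := by
    refine Finset.sum_congr rfl fun k _ => ?_
    rw [Finset.mul_sum]
    exact Finset.sum_congr rfl fun l _ => by ring
  rw [h1, h2, h3]
  ring

lemma Bform_eq_zero_of_const {U v : Fin N.n → ℝ} (h : ∀ k l, v k = v l) :
    N.Bform U v = 0 := by
  rw [Bform_apply]
  refine Finset.sum_eq_zero fun k _ => Finset.sum_eq_zero fun l _ => ?_
  rw [h k l]; ring

lemma const_of_Bform_self_eq_zero {v : Fin N.n → ℝ} (h : N.Bform v v = 0)
    (k l : Fin N.n) : v k = v l := by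
  have hadj : ∀ a b : Fin N.n, N.graph.Adj a b → v a = v b := by
    intro a b hab
    have hterm : ∀ x ∈ (Finset.univ : Finset (Fin N.n)) ×ˢ Finset.univ,
        (0:ℝ) ≤ N.c x.1 x.2 * (v x.1 - v x.2) * (v x.1 - v x.2) := by
      intro x _
      have : N.c x.1 x.2 * (v x.1 - v x.2) * (v x.1 - v x.2)
          = N.c x.1 x.2 * ((v x.1 - v x.2) * (v x.1 - v x.2)) := by ring
      rw [this]
      exact mul_nonneg (N.c_nonneg _ _) (mul_self_nonneg _)
    have hsum : ∑ x ∈ (Finset.univ : Finset (Fin N.n)) ×ˢ Finset.univ,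
        N.c x.1 x.2 * (v x.1 - v x.2) * (v x.1 - v x.2) = 0 := by
      rw [Finset.sum_product]
      exact (N.Bform_apply v v) ▸ h
    have hzero := (Finset.sum_eq_zero_iff_of_nonneg hterm).mp hsum (a, b)
      (Finset.mem_product.mpr ⟨Finset.mem_univ _, Finset.mem_univ _⟩)
    have hc := N.c_pos a b hab
    have hd : v a - v b = 0 := by
      rcases mul_eq_zero.mp hzero with h1 | h1
      · rcases mul_eq_zero.mp h1 with h2 | h2
        · exact absurd h2 (ne_of_gt hc)
        · exact h2
      · exact h1
    linarith
  suffices H : ∀ {a b : Fin N.n} (_ : N.graph.Walk a b), v a = v b by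
    exact (N.connected.preconnected k l).elim fun w => H w
  intro a b w
  induction w with
  | nil => rfl
  | cons h' _ ih => exact (hadj _ _ h').trans ih

/-- The space of voltage functions constant on each superport. -/
def V0 : Submodule ℝ (Fin N.n → ℝ) where
  carrier := {v | ∀ k, k ∈ N.M → N.root k ≠ k → v k = v (N.root k)}
  add_mem' := fun ha hb k hk hr => by
    simp only [Pi.add_apply, ha k hk hr, hb k hk hr]
  zero_mem' := fun k hk hr => rfl
  smul_mem' := fun c a ha k hk hr => by
    simp only [Pi.smul_apply, smul_eq_mul, ha k hk hr]

lemma interior_mem_V0 {j : Fin N.n} (hj : j ∉ N.M) :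
    (fun k => if k = j then (1:ℝ) else 0) ∈ N.V0 := by
  intro k hk hr
  show (if k = j then (1:ℝ) else 0) = (if N.root k = j then (1:ℝ) else 0)
  rw [if_neg fun (h : k = j) => hj (h ▸ hk),
    if_neg fun (h : N.root k = j) => hj (h ▸ N.root_mem hk)]

lemma port_mem_V0 (i : Fin N.p) :
    (fun k => if k ∈ N.A i then (1:ℝ) else 0) ∈ N.V0 := by
  intro k hk _
  obtain ⟨i', hi'⟩ := N.mem_M_iff.mp hk
  have hroot : N.root k ∈ N.A i' := N.root_mem_port hi'
  show (if k ∈ N.A i then (1:ℝ) else 0) = (if N.root k ∈ N.A i then (1:ℝ) else 0)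
  by_cases hki : k ∈ N.A i
  · rw [if_pos hki, if_pos (N.port_unique hi' hki ▸ hroot)]
  · rw [if_neg hki,
      if_neg fun (hcon : N.root k ∈ N.A i) => hki (N.port_unique hroot hcon ▸ hi')]

lemma exists_axioms (ΔU : Fin N.n → ℝ) :
    ∃ U : Fin N.n → ℝ, N.Axioms ΔU U (fun k l => N.c k l * (U k - U l)) := by
  classical
  set U0 : Fin N.n → ℝ := fun k => if k ∈ N.M ∧ N.root k ≠ k then ΔU k else 0 with hU0
  set Br : N.V0 →ₗ[ℝ] N.V0 →ₗ[ℝ] ℝ :=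
    (N.Bform).compl₁₂ N.V0.subtype N.V0.subtype with hBrdef
  have hBr : ∀ (x y : N.V0), Br x y = N.Bform x.1 y.1 := fun x y => rfl
  set f : N.V0 →ₗ[ℝ] ℝ := -((N.Bform U0).comp N.V0.subtype) with hfdef
  have hfval : ∀ x : N.V0, f x = -(N.Bform U0 x.1) := fun x => rfl
  obtain ⟨u, hu⟩ := key_surj Br
    (fun x y => by rw [hBr, hBr]; exact N.Bform_symm x.1 y.1) f
    (fun v hv => by
      have hvv : N.Bform v.1 v.1 = 0 := by
        have := congrArg (fun g => g v) hv
        simpa [hBr] using this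
      rw [hfval, N.Bform_eq_zero_of_const (N.const_of_Bform_self_eq_zero hvv), neg_zero])
  set U : Fin N.n → ℝ := fun k => U0 k + u.1 k with hUdef
  have hB0 : ∀ w, (hw : w ∈ N.V0) → N.Bform U w = 0 := by
    intro w hw
    have h1 : N.Bform U w = N.Bform U0 w + N.Bform u.1 w := by
      have : U = U0 + u.1 := rfl
      rw [this, map_add]
      rfl
    have h2 : N.Bform u.1 w = -(N.Bform U0 w) := by
      have := congrArg (fun g => g (⟨w, hw⟩ : N.V0)) hu
      simpa [hBr, hfval] using this
    rw [h1, h2]; ring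
  have hS : ∀ w, w ∈ N.V0 → ∑ k, w k * ∑ l, N.c k l * (U k - U l) = 0 := by
    intro w hw
    have := hB0 w hw
    rw [N.Bform_eq] at this
    linarith
  refine ⟨U, fun k l => rfl, ?_, ?_, ?_⟩
  · -- interior axiom
    intro k hk
    have := hS _ (N.interior_mem_V0 hk)
    simp only [ite_mul, one_mul, zero_mul, Finset.sum_ite_eq', Finset.mem_univ,
      if_true] at this
    exact this
  · -- port axiom
    intro i _
    have := hS _ (N.port_mem_V0 i)
    simp only [ite_mul, one_mul, zero_mul, Finset.sum_ite_mem, Finset.univ_inter] at this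
    exact this
  · -- boundary axiom
    intro k hk hr
    obtain ⟨i', hi'⟩ := N.mem_M_iff.mp hk
    have h1 : u.1 k = u.1 (N.root k) := u.2 k hk hr
    have h2 : U0 k = ΔU k := if_pos ⟨hk, hr⟩
    have h3 : U0 (N.root k) = 0 := if_neg (fun hc => hc.2 (N.root_root' hi'))
    show (U0 k + u.1 k) - (U0 (N.root k) + u.1 (N.root k)) = ΔU k
    rw [h1, h2, h3]; ring

lemma portsum {ΔU U : Fin N.n → ℝ} {I : Fin N.n → Fin N.n → ℝ}
    (h : N.Axioms ΔU U I) (i : Fin N.p) : ∑ k ∈ N.A i, ∑ l, I k l = 0 := by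
  obtain ⟨hC, hI, hP, hB⟩ := h
  by_cases hi : i = N.lastPort
  · subst hi
    have hanti : ∀ k l, I k l = - I l k := fun k l => by
      rw [hC, hC, N.c_symm l k]; ring
    have htot : ∑ k, ∑ l, I k l = 0 := by
      have he : ∑ k, ∑ l, I k l = - ∑ k, ∑ l, I k l := by
        conv_lhs => rw [Finset.sum_comm]
        rw [← Finset.sum_neg_distrib]
        refine Finset.sum_congr rfl fun k _ => ?_
        rw [← Finset.sum_neg_distrib]
        exact Finset.sum_congr rfl fun l _ => hanti l k
      linarith
    have hM : ∑ k ∈ N.M, ∑ l, I k l = 0 :=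
      (Finset.sum_subset (Finset.subset_univ N.M) (fun x _ hx => hI x hx)).trans htot
    have hdisj : Set.PairwiseDisjoint ↑(Finset.univ : Finset (Fin N.p)) N.A :=
      fun a _ b _ hab => N.A_disjoint a b hab
    have hsplit : ∑ j, ∑ k ∈ N.A j, ∑ l, I k l = 0 := by
      rw [← Finset.sum_biUnion hdisj]
      exact hM
    rw [Finset.sum_eq_single_of_mem N.lastPort (Finset.mem_univ _)
      (fun j _ hj => hP j hj)] at hsplit
    exact hsplit
  · exact hP i hi

lemma sum_reduce {ΔU U ΔU' U' : Fin N.n → ℝ} {I I' : Fin N.n → Fin N.n → ℝ}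
    (h : N.Axioms ΔU U I) (h' : N.Axioms ΔU' U' I') :
    ∑ k, U' k * ∑ l, I k l = ∑ x : N.NonRoot, ΔU' x.1 * ∑ l, I x.1 l := by
  classical
  set F : Fin N.n → ℝ := fun k => ∑ l, I k l with hF
  set G : Fin N.n → ℝ := fun k =>
    if k ∈ N.M ∧ N.root k ≠ k then ΔU' k * F k else 0 with hG
  have hdisj : Set.PairwiseDisjoint ↑(Finset.univ : Finset (Fin N.p)) N.A :=
    fun a _ b _ hab => N.A_disjoint a b hab
  have step1 : ∑ k, U' k * F k = ∑ k ∈ N.M, U' k * F k :=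
    (Finset.sum_subset (Finset.subset_univ N.M)
      (fun x _ hx => by rw [hF]; simp only; rw [h.2.1 x hx, mul_zero])).symm
  have step2 : ∑ k ∈ N.M, U' k * F k = ∑ i, ∑ k ∈ N.A i, U' k * F k :=
    Finset.sum_biUnion hdisj
  have step3 : ∀ i, ∑ k ∈ N.A i, U' k * F k = ∑ k ∈ N.A i, G k := by
    intro i
    have hsum0 : ∑ k ∈ N.A i, F k = 0 := N.portsum h i
    have hdecomp : ∑ k ∈ N.A i, U' k * F k
        = (∑ k ∈ N.A i, (U' k - U' ((N.A i).max' (N.A_nonempty i))) * F k)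
          + U' ((N.A i).max' (N.A_nonempty i)) * ∑ k ∈ N.A i, F k := by
      rw [Finset.mul_sum, ← Finset.sum_add_distrib]
      exact Finset.sum_congr rfl fun k _ => by ring
    rw [hdecomp, hsum0, mul_zero, add_zero]
    refine Finset.sum_congr rfl fun k hk => ?_
    have hroot : N.root k = (N.A i).max' (N.A_nonempty i) := N.root_eq_max' hk
    have hkM : k ∈ N.M := N.mem_M_iff.mpr ⟨i, hk⟩
    by_cases hkr : k = (N.A i).max' (N.A_nonempty i)
    · have hrr : N.root k = k := by rw [hroot, hkr]
      rw [hG]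
      simp only
      rw [if_neg (fun hc => hc.2 hrr), hkr, sub_self, zero_mul]
    · have hcond : k ∈ N.M ∧ N.root k ≠ k :=
        ⟨hkM, fun hh => hkr (hroot ▸ hh).symm⟩
      rw [hG]
      simp only
      rw [if_pos hcond]
      have hb := h'.2.2.2 k hkM hcond.2
      rw [hroot] at hb
      rw [hb]
  have step4 : ∑ i, ∑ k ∈ N.A i, G k = ∑ k ∈ N.M, G k :=
    (Finset.sum_biUnion hdisj).symm
  have step5 : ∑ k ∈ N.M, G k = ∑ k, G k :=
    Finset.sum_subset (Finset.subset_univ N.M)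
      (fun x _ hx => by rw [hG]; simp only; rw [if_neg (fun hc => hx hc.1)])
  have step6 : ∑ k, G k = ∑ x : N.NonRoot, ΔU' x.1 * F x.1 := by
    rw [hG, ← Finset.sum_filter]
    exact Finset.sum_subtype _ (by simp) _
  calc ∑ k, U' k * F k = ∑ i, ∑ k ∈ N.A i, U' k * F k := step1.trans step2
    _ = ∑ i, ∑ k ∈ N.A i, G k := Finset.sum_congr rfl fun i _ => step3 i
    _ = ∑ x : N.NonRoot, ΔU' x.1 * F x.1 := (step4.trans step5).trans step6

lemma reciprocity {ΔU U ΔU' U' : Fin N.n → ℝ} {I I' : Fin N.n → Fin N.n → ℝ}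
    (h : N.Axioms ΔU U I) (h' : N.Axioms ΔU' U' I') :
    ∑ x : N.NonRoot, ΔU' x.1 * ∑ l, I x.1 l
      = ∑ x : N.NonRoot, ΔU x.1 * ∑ l, I' x.1 l := by
  have g1 : ∀ k, ∑ l, I k l = ∑ l, N.c k l * (U k - U l) :=
    fun k => Finset.sum_congr rfl fun l _ => h.1 k l
  have g2 : ∀ k, ∑ l, I' k l = ∑ l, N.c k l * (U' k - U' l) :=
    fun k => Finset.sum_congr rfl fun l _ => h'.1 k l
  have green : ∑ k, U' k * ∑ l, N.c k l * (U k - U l)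
      = ∑ k, U k * ∑ l, N.c k l * (U' k - U' l) := by
    have e1 := N.Bform_eq U U'
    have e2 := N.Bform_eq U' U
    have e3 := N.Bform_symm U U'
    linarith
  calc ∑ x : N.NonRoot, ΔU' x.1 * ∑ l, I x.1 l
      = ∑ k, U' k * ∑ l, I k l := (N.sum_reduce h h').symm
    _ = ∑ k, U' k * ∑ l, N.c k l * (U k - U l) :=
        Finset.sum_congr rfl fun k _ => by rw [g1]
    _ = ∑ k, U k * ∑ l, N.c k l * (U' k - U' l) := green
    _ = ∑ k, U k * ∑ l, I' k l :=
        Finset.sum_congr rfl fun k _ => by rw [g2]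
    _ = ∑ x : N.NonRoot, ΔU x.1 * ∑ l, I' x.1 l := N.sum_reduce h' h

end Network
end Superport

namespace Superport

/-- **Symmetry of the response matrix of a superport network.** -/
theorem response_symmetric (N : Network) (hmp : N.p < N.m)
    (L : Matrix N.NonRoot N.NonRoot ℝ) (hL : N.IsResponse L) :
    ∀ i j : N.NonRoot, L i j = L j i := by
  intro i j
  by_cases hij : i = j
  · rw [hij]
  classical
  set ΔU : Fin N.n → ℝ := fun k => if k = i.1 then 1 else 0 with hΔUdef
  set ΔU' : Fin N.n → ℝ := fun k => if k = j.1 then 1 else 0 with hΔU'def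
  obtain ⟨U, hU⟩ := N.exists_axioms ΔU
  obtain ⟨U', hU'⟩ := N.exists_axioms ΔU'
  have hrec := N.reciprocity hU hU'
  have e1 := hL ΔU U _ hU
  have e2 := hL ΔU' U' _ hU'
  have r1 : ∑ x : N.NonRoot, ΔU' x.1 * ∑ l, N.c x.1 l * (U x.1 - U l)
      = ∑ x : N.NonRoot, ΔU' x.1 * ∑ y : N.NonRoot, L x y * ΔU y.1 :=
    Finset.sum_congr rfl fun x _ => by rw [e1 x]
  have r2 : ∑ x : N.NonRoot, ΔU x.1 * ∑ l, N.c x.1 l * (U' x.1 - U' l)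
      = ∑ x : N.NonRoot, ΔU x.1 * ∑ y : N.NonRoot, L x y * ΔU' y.1 :=
    Finset.sum_congr rfl fun x _ => by rw [e2 x]
  rw [r1, r2] at hrec
  have hΔU : ∀ y : N.NonRoot, ΔU y.1 = if y = i then 1 else 0 := by
    intro y
    by_cases hy : y = i
    · rw [hΔUdef, if_pos hy]
      simp [hy]
    · rw [hΔUdef, if_neg hy]
      simp only
      rw [if_neg (fun hc => hy (Subtype.ext hc))]
  have hΔU' : ∀ y : N.NonRoot, ΔU' y.1 = if y = j then 1 else 0 := by
    intro y
    by_cases hy : y = j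
    · rw [hΔU'def, if_pos hy]
      simp [hy]
    · rw [hΔU'def, if_neg hy]
      simp only
      rw [if_neg (fun hc => hy (Subtype.ext hc))]
  simp only [hΔU, hΔU', mul_ite, mul_one, mul_zero, ite_mul, one_mul, zero_mul,
    Finset.sum_ite_eq', Finset.mem_univ, if_true] at hrec
  exact hrec.symm

end Superport
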